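/- Laplace expansion formula for the permanent: Let A be an m×m complex matrix, let k, l ∈ ℕ, and let p, q ∈ ℕ^m with |p| = |q| = k + l. Then Per(A_{p,q}) = (k! l! / (k+l)!) · Σ (p! q! / (s! t! u! v!)) · Per(A_{s,u}) · Per(A_{t,v}), where the sum ranges over all s, t, u, v ∈ ℕ^m with s + t = p, u + v = q, |s| = |u| = k, and |t| = |v| = l. -/

import Mathlib

open BigOperators Matrix
open Finset

/-- The list of row indices of `A_{p,·}`: each index `i` repeated `p i` times, in order. -/
def repList {m : ℕ} (p : Fin m → ℕ) : List (Fin m) :=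
  (List.finRange m).flatMap fun i => List.replicate (p i) i

lemma repList_length {m : ℕ} (p : Fin m → ℕ) : (repList p).length = ∑ i, p i := by
  simp only [repList, List.length_flatMap, Fin.sum_univ_def]
  congr 1
  apply List.map_congr_left
  intro i _
  simp

/-- The matrix `A_{p,q}`: row `i` repeated `p i` times, column `j` repeated `q j` times. -/
def repMat {m : ℕ} (A : Matrix (Fin m) (Fin m) ℂ) (p q : Fin m → ℕ) :
    Matrix (Fin (∑ i, p i)) (Fin (∑ j, q j)) ℂ :=
  Matrix.of fun r c =>
    A ((repList p).get (Fin.cast (repList_length p).symm r))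
      ((repList q).get (Fin.cast (repList_length q).symm c))

/-- `Per(A_{p,q})`; by convention `0` when the matrix is not square. -/
noncomputable def perRep {m : ℕ} (A : Matrix (Fin m) (Fin m) ℂ) (p q : Fin m → ℕ) : ℂ :=
  if h : (∑ i, p i) = (∑ j, q j) then
    (Matrix.of fun r c : Fin (∑ i, p i) => repMat A p q r (Fin.cast h c)).permanent
  else 0



lemma sum_map_ite {β : Type*} [DecidableEq β] (l : List β) (i : β) :
    (l.map fun x => if x = i then (1:ℕ) else 0).sum = l.count i := by
  induction l with
  | nil => simp
  | cons a t ih => by_cases h : a = i <;> simp [List.count_cons, ih, h, beq_iff_eq, Nat.add_comm]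

lemma card_filter_get {β : Type*} [DecidableEq β] (l : List β) (i : β) :
    (univ.filter fun a : Fin l.length => l.get a = i).card = l.count i := by
  rw [Finset.card_filter, Fin.sum_univ_def]
  have : List.map (fun a : Fin l.length => if l.get a = i then (1:ℕ) else 0)
      (List.finRange l.length) = List.map (fun x => if x = i then 1 else 0) l := by
    rw [← List.ofFn_eq_map]
    conv_rhs => rw [← List.ofFn_get l]
    rw [List.map_ofFn]
    rfl
  rw [this, sum_map_ite]

variable {α β : Type*} [Fintype α] [DecidableEq α] [DecidableEq β]

/-- fiber count vector of a function -/
def cnt (g : α → β) : β → ℕ := fun i => (univ.filter fun a => g a = i).card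

lemma cnt_comp_equiv {α' : Type*} [Fintype α'] [DecidableEq α'] (e : α' ≃ α) (g : α → β) :
    cnt (g ∘ e) = cnt g := by
  funext i
  unfold cnt
  apply Finset.card_bij (fun a _ => e a)
  · intro a ha; simpa using (Finset.mem_filter.mp ha).2
  · intro a _ b _ h; exact e.injective h
  · intro b hb
    exact ⟨e.symm b, by simpa using (Finset.mem_filter.mp hb).2, e.apply_symm_apply b⟩

lemma sum_cnt [Fintype β] (g : α → β) : ∑ i, cnt g i = Fintype.card α := by
  rw [← Finset.card_univ]
  exact (Finset.card_eq_sum_card_fiberwise (fun a _ => Finset.mem_univ (g a))).symm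

lemma cnt_card_subtype (g : α → β) (i : β) : Fintype.card {a // g a = i} = cnt g i := by
  simp [cnt, Fintype.card_subtype]

lemma card_perm_comp [Fintype β] (r g : α → β) :
    (univ.filter fun π : Equiv.Perm α => r ∘ π = g).card =
      if cnt g = cnt r then ∏ i, (cnt r i).factorial else 0 := by
  split_ifs with h
  · -- construct π₀ with r ∘ π₀ = g
    have fib : ∀ i, {a // g a = i} ≃ {a // r a = i} := fun i =>
      Fintype.equivOfCardEq (by rw [cnt_card_subtype, cnt_card_subtype, h])
    set π₀ : α ≃ α :=
      (Equiv.sigmaFiberEquiv g).symm.trans ((Equiv.sigmaCongrRight fib).trans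
        (Equiv.sigmaFiberEquiv r)) with hπ₀
    have hr : ∀ a, r (π₀ a) = g a := by
      intro a
      simp only [hπ₀, Equiv.trans_apply, Equiv.sigmaFiberEquiv, Equiv.sigmaCongrRight,
        Equiv.coe_fn_symm_mk, Equiv.coe_fn_mk]
      exact (fib (g a) ⟨a, rfl⟩).2
    rw [← Fintype.card_subtype]
    have e1 : {π : Equiv.Perm α // r ∘ π = g} ≃ {σ : Equiv.Perm α // g ∘ σ = g} := by
      refine Equiv.subtypeEquiv (Equiv.mulLeft π₀⁻¹) ?_
      intro π
      have hinv : ∀ x, ((Equiv.mulLeft π₀⁻¹) π) x = π₀⁻¹ (π x) := fun x => rfl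
      constructor
      · intro hπ; funext a
        calc g (((Equiv.mulLeft π₀⁻¹) π) a) = r (π₀ (π₀⁻¹ (π a))) := by
              rw [hinv]; exact (hr _).symm
          _ = r (π a) := by simp
          _ = g a := congrFun hπ a
      · intro hσ; funext a
        calc r (π a) = r (π₀ (π₀⁻¹ (π a))) := by simp
          _ = g (π₀⁻¹ (π a)) := hr _
          _ = g a := by rw [← hinv]; exact congrFun hσ a
    rw [Fintype.card_congr e1, DomMulAct.stabilizer_card g]
    exact Finset.prod_congr rfl fun i _ => by rw [cnt_card_subtype, h]
  · rw [Finset.card_eq_zero, Finset.filter_eq_empty_iff]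
    intro π _ hπ
    exact h (hπ ▸ cnt_comp_equiv π r)

set_option linter.unusedSectionVars false

lemma sum_perm_comp [Fintype β] (r : α → β) (F : (α → β) → ℂ) :
    ∑ π : Equiv.Perm α, F (r ∘ π) =
      ((∏ i, (cnt r i).factorial : ℕ) : ℂ) *
        ∑ g ∈ univ.filter (fun g => cnt g = cnt r), F g := by
  have h1 : ∀ π : Equiv.Perm α, F (r ∘ π) = ∑ g : α → β, if r ∘ π = g then F g else 0 := by
    intro π; rw [Finset.sum_ite_eq univ (r ∘ π) F]; simp
  simp_rw [h1]
  rw [Finset.sum_comm]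
  have h2 : ∀ g : α → β, (∑ π : Equiv.Perm α, if r ∘ π = g then F g else 0)
      = ((univ.filter fun π : Equiv.Perm α => r ∘ π = g).card : ℂ) * F g := by
    intro g
    rw [← Finset.sum_filter, Finset.sum_const, nsmul_eq_mul]
  simp_rw [h2, card_perm_comp]
  rw [Finset.sum_filter, Finset.mul_sum]
  apply Finset.sum_congr rfl
  intro g _
  split_ifs <;> simp

lemma sum_perm_perm (M : Matrix α α ℂ) :
    ∑ π : Equiv.Perm α, ∑ ρ : Equiv.Perm α, (∏ i, M (π i) (ρ i)) =
      ((Fintype.card α).factorial : ℂ) * M.permanent := by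
  have h1 : ∀ π : Equiv.Perm α, (∑ ρ : Equiv.Perm α, ∏ i, M (π i) (ρ i)) = M.permanent := by
    intro π
    rw [← Matrix.permanent_transpose]
    unfold Matrix.permanent
    refine (Fintype.sum_equiv (Equiv.mulRight π) _ _ ?_).symm
    intro σ
    rw [← Equiv.prod_comp π fun j => Matrix.transpose M (σ j) j]
    apply Finset.prod_congr rfl
    intro i _
    simp [Matrix.transpose_apply]
  simp_rw [h1, Finset.sum_const, nsmul_eq_mul]
  simp [Fintype.card_perm]

lemma permanent_reindex {γ : Type*} [Fintype γ] [DecidableEq γ] (e : α ≃ γ)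
    (M : Matrix γ γ ℂ) : (M.submatrix e e).permanent = M.permanent := by
  unfold Matrix.permanent
  refine Fintype.sum_equiv (e.permCongr) _ _ ?_
  intro σ
  rw [← Equiv.prod_comp e fun j => M ((e.permCongr σ) j) j]
  apply Finset.prod_congr rfl
  intro i _
  simp [Matrix.submatrix_apply, Equiv.permCongr_apply]

lemma cnt_sumElim {α' : Type*} [Fintype α'] [DecidableEq α'] (g1 : α → β) (g2 : α' → β) :
    cnt (Sum.elim g1 g2) = fun i => cnt g1 i + cnt g2 i := by
  funext i
  simp only [cnt, Finset.card_filter]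
  rw [Fintype.sum_sum_type]
  simp only [Sum.elim_inl, Sum.elim_inr]
  congr 1 <;> exact Finset.sum_congr rfl fun x _ => by split_ifs <;> simp_all

lemma cnt_get {N mm : ℕ} (l : List (Fin mm)) (h : N = l.length) :
    cnt (fun a : Fin N => l.get (Fin.cast h a)) = fun i => l.count i := by
  subst h
  funext i
  simpa [cnt] using card_filter_get l i

lemma cnt_rf {m N : ℕ} (p : Fin m → ℕ) (h : N = ∑ i, p i) :
    cnt (fun a : Fin N => (repList p).get
      (Fin.cast (h.trans (repList_length p).symm) a)) = p := by
  funext i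
  rw [congrFun (cnt_get (repList p) (h.trans (repList_length p).symm)) i]
  -- count in repList
  unfold repList
  rw [List.count_flatMap]
  have : (List.count i ∘ fun j : Fin m => List.replicate (p j) j)
      = fun j => if j = i then p j else 0 := by
    funext j
    rcases eq_or_ne j i with rfl | hne
    · simp
    · simp [List.count_replicate, hne]
  rw [this, ← Fin.sum_univ_def]
  simp

lemma claimB {m N : ℕ} (A : Matrix (Fin m) (Fin m) ℂ) (s u : Fin m → ℕ)
    (hs : ∑ i, s i = N) (hu : ∑ i, u i = N) :
    ((N.factorial : ℕ) : ℂ) * perRep A s u =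
      ((∏ i, (s i).factorial : ℕ) : ℂ) * ((∏ i, (u i).factorial : ℕ) : ℂ) *
        ∑ g ∈ univ.filter (fun g : Fin N → Fin m => cnt g = s),
          ∑ h ∈ univ.filter (fun h : Fin N → Fin m => cnt h = u),
            ∏ a, A (g a) (h a) := by
  set r : Fin N → Fin m := fun a => (repList s).get
    (Fin.cast (hs.symm.trans (repList_length s).symm) a) with hrdef
  set c : Fin N → Fin m := fun a => (repList u).get
    (Fin.cast (hu.symm.trans (repList_length u).symm) a) with hcdef
  have hcr : cnt r = s := cnt_rf s hs.symm
  have hcc : cnt c = u := cnt_rf u hu.symm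
  -- step 1: the double-filtered sum equals double perm sum
  have key : ((∏ i, (s i).factorial : ℕ) : ℂ) * ((∏ i, (u i).factorial : ℕ) : ℂ) *
        (∑ g ∈ univ.filter (fun g : Fin N → Fin m => cnt g = s),
          ∑ h ∈ univ.filter (fun h : Fin N → Fin m => cnt h = u),
            ∏ a, A (g a) (h a))
      = ∑ π : Equiv.Perm (Fin N), ∑ ρ : Equiv.Perm (Fin N), ∏ a, A (r (π a)) (c (ρ a)) := by
    have inner : ∀ g : Fin N → Fin m,
        ((∏ i, (u i).factorial : ℕ) : ℂ) *
          ∑ h ∈ univ.filter (fun h : Fin N → Fin m => cnt h = u), ∏ a, A (g a) (h a)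
        = ∑ ρ : Equiv.Perm (Fin N), ∏ a, A (g a) (c (ρ a)) := by
      intro g
      have := sum_perm_comp c (fun h => ∏ a, A (g a) (h a))
      rw [hcc] at this
      simp only [Function.comp_apply] at this
      exact this.symm
    calc ((∏ i, (s i).factorial : ℕ) : ℂ) * ((∏ i, (u i).factorial : ℕ) : ℂ) *
          (∑ g ∈ univ.filter (fun g : Fin N → Fin m => cnt g = s),
            ∑ h ∈ univ.filter (fun h : Fin N → Fin m => cnt h = u), ∏ a, A (g a) (h a))
        = ((∏ i, (s i).factorial : ℕ) : ℂ) *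
            ∑ g ∈ univ.filter (fun g : Fin N → Fin m => cnt g = s),
              ∑ ρ : Equiv.Perm (Fin N), ∏ a, A (g a) (c (ρ a)) := by
          rw [mul_assoc, Finset.mul_sum]
          congr 1
          exact Finset.sum_congr rfl fun g _ => inner g
      _ = ∑ π : Equiv.Perm (Fin N), ∑ ρ : Equiv.Perm (Fin N), ∏ a, A (r (π a)) (c (ρ a)) := by
          have := sum_perm_comp r (fun g => ∑ ρ : Equiv.Perm (Fin N), ∏ a, A (g a) (c (ρ a)))
          rw [hcr] at this
          simp only [Function.comp_apply] at this
          exact this.symm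
  rw [key]
  -- step 2: double perm sum equals N! * permanent
  have h' : (∑ i, s i) = (∑ j, u j) := hs.trans hu.symm
  have hper : perRep A s u = (Matrix.of fun r' c' : Fin (∑ i, s i) =>
      repMat A s u r' (Fin.cast h' c')).permanent := by
    rw [perRep, dif_pos h']
  have hM : (Matrix.of fun a b : Fin N => A (r a) (c b)) =
      ((Matrix.of fun r' c' : Fin (∑ i, s i) => repMat A s u r' (Fin.cast h' c')).submatrix
        (finCongr hs.symm) (finCongr hs.symm)) := by
    ext a b
    rfl
  have := sum_perm_perm (Matrix.of fun a b : Fin N => A (r a) (c b))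
  simp only [Matrix.of_apply] at this
  rw [this, hM, permanent_reindex, ← hper, Fintype.card_fin]

lemma coe_eqf_symm {m : ℕ} (g : Fin m → ℕ) : ⇑(Finsupp.equivFunOnFinite.symm g) = g :=
  Finsupp.equivFunOnFinite.apply_symm_apply g

lemma group_lemma {m k l : ℕ} (w : Fin m → ℕ) (F : (Fin k → Fin m) → (Fin l → Fin m) → ℂ) :
    ∑ st ∈ (Finset.HasAntidiagonal.antidiagonal (Finsupp.equivFunOnFinite.symm w)).filter
        (fun st => (∑ i, st.1 i) = k ∧ (∑ i, st.2 i) = l),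
      ∑ g1 ∈ univ.filter (fun g1 : Fin k → Fin m => cnt g1 = ⇑st.1),
        ∑ g2 ∈ univ.filter (fun g2 : Fin l → Fin m => cnt g2 = ⇑st.2), F g1 g2
    = ∑ g1 : Fin k → Fin m, ∑ g2 : Fin l → Fin m,
        if (fun i => cnt g1 i + cnt g2 i) = w then F g1 g2 else 0 := by
  simp_rw [Finset.sum_filter (fun g2 : Fin l → Fin m => cnt g2 = _),
    Finset.sum_filter (fun g1 : Fin k → Fin m => cnt g1 = _)]
  rw [Finset.sum_comm]
  apply Finset.sum_congr rfl
  intro g1 _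
  have push : ∀ (c : Prop) [Decidable c] (s : Finset (Fin l → Fin m)) (f : (Fin l → Fin m) → ℂ),
      (if c then ∑ x ∈ s, f x else 0) = ∑ x ∈ s, if c then f x else 0 := by
    intro c _ s f
    split_ifs <;> simp
  simp_rw [push]
  rw [Finset.sum_comm]
  apply Finset.sum_congr rfl
  intro g2 _
  set st₀ : (Fin m →₀ ℕ) × (Fin m →₀ ℕ) :=
    (Finsupp.equivFunOnFinite.symm (cnt g1), Finsupp.equivFunOnFinite.symm (cnt g2)) with hst₀
  have huniq : ∀ st : (Fin m →₀ ℕ) × (Fin m →₀ ℕ),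
      ((cnt g1 = ⇑st.1) ∧ (cnt g2 = ⇑st.2)) ↔ st = st₀ := by
    intro st
    constructor
    · rintro ⟨h1, h2⟩
      apply Prod.ext
      · ext i
        rw [hst₀]
        simp only [Finsupp.coe_equivFunOnFinite_symm]
        exact (congrFun h1 i).symm
      · ext i
        rw [hst₀]
        simp only [Finsupp.coe_equivFunOnFinite_symm]
        exact (congrFun h2 i).symm
    · rintro rfl
      constructor <;> simp [hst₀, coe_eqf_symm]
  have step : ∀ st : (Fin m →₀ ℕ) × (Fin m →₀ ℕ),
      (if cnt g1 = ⇑st.1 then (if cnt g2 = ⇑st.2 then F g1 g2 else 0) else 0)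
        = if st = st₀ then F g1 g2 else 0 := by
    intro st
    rw [← ite_and, if_congr (huniq st) rfl rfl]
  simp_rw [step]
  rw [Finset.sum_ite_eq' _ st₀ (fun _ => F g1 g2)]
  have hmem : st₀ ∈ (Finset.HasAntidiagonal.antidiagonal (Finsupp.equivFunOnFinite.symm w)).filter
        (fun st => (∑ i, st.1 i) = k ∧ (∑ i, st.2 i) = l)
      ↔ (fun i => cnt g1 i + cnt g2 i) = w := by
    rw [Finset.mem_filter, Finset.HasAntidiagonal.mem_antidiagonal]
    constructor
    · rintro ⟨hadd, -⟩
      have := congrArg (fun f : Fin m →₀ ℕ => ⇑f) hadd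
      exact (by simpa [hst₀, coe_eqf_symm] using this : cnt g1 + cnt g2 = w)
    · intro hadd
      refine ⟨?_, ?_, ?_⟩
      · apply DFunLike.coe_injective
        simpa [hst₀, coe_eqf_symm] using (show cnt g1 + cnt g2 = w from hadd)
      · simpa [hst₀, coe_eqf_symm] using (sum_cnt g1).trans (Fintype.card_fin k)
      · simpa [hst₀, coe_eqf_symm] using (sum_cnt g2).trans (Fintype.card_fin l)
  rw [if_congr hmem rfl rfl]

lemma pushC {γ : Type*} (c : Prop) [Decidable c] (s : Finset γ) (f : γ → ℂ) :
    (if c then ∑ x ∈ s, f x else 0) = ∑ x ∈ s, if c then f x else 0 := by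
  split_ifs <;> simp

lemma split_lemma {m k l : ℕ} (A : Matrix (Fin m) (Fin m) ℂ) (p q : Fin m → ℕ) :
    ∑ g ∈ univ.filter (fun g : Fin (k + l) → Fin m => cnt g = p),
      ∑ h ∈ univ.filter (fun h : Fin (k + l) → Fin m => cnt h = q), ∏ a, A (g a) (h a)
    = ∑ g1 : Fin k → Fin m, ∑ g2 : Fin l → Fin m,
        (if (fun i => cnt g1 i + cnt g2 i) = p then
          (∑ h1 : Fin k → Fin m, ∑ h2 : Fin l → Fin m,
            if (fun i => cnt h1 i + cnt h2 i) = q then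
              (∏ a, A (g1 a) (h1 a)) * ∏ b, A (g2 b) (h2 b) else 0)
          else 0) := by
  classical
  set E : ((Fin k → Fin m) × (Fin l → Fin m)) ≃ (Fin (k + l) → Fin m) :=
    (Equiv.sumArrowEquivProdArrow (Fin k) (Fin l) (Fin m)).symm.trans
      (Equiv.arrowCongr finSumFinEquiv (Equiv.refl (Fin m))) with hE
  have hEapp : ∀ (g1 : Fin k → Fin m) (g2 : Fin l → Fin m),
      E (g1, g2) = Sum.elim g1 g2 ∘ ⇑finSumFinEquiv.symm := by
    intro g1 g2
    funext a
    simp [hE, Equiv.sumArrowEquivProdArrow, Equiv.arrowCongr]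
  have hcntE : ∀ (g1 : Fin k → Fin m) (g2 : Fin l → Fin m),
      cnt (E (g1, g2)) = fun i => cnt g1 i + cnt g2 i := by
    intro g1 g2
    rw [hEapp, cnt_comp_equiv finSumFinEquiv.symm (Sum.elim g1 g2), cnt_sumElim]
  have hprodE : ∀ (g1 h1 : Fin k → Fin m) (g2 h2 : Fin l → Fin m),
      (∏ a, A (E (g1, g2) a) (E (h1, h2) a)) =
        (∏ a, A (g1 a) (h1 a)) * ∏ b, A (g2 b) (h2 b) := by
    intro g1 h1 g2 h2
    rw [← Equiv.prod_comp finSumFinEquiv fun a => A (E (g1, g2) a) (E (h1, h2) a)]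
    rw [hEapp g1 g2, hEapp h1 h2]
    simp only [Function.comp_apply, Equiv.symm_apply_apply]
    rw [Fintype.prod_sum_type]
    simp
  simp_rw [Finset.sum_filter, pushC]
  rw [← Equiv.sum_comp E (fun g => ∑ h : Fin (k+l) → Fin m,
    if cnt g = p then (if cnt h = q then ∏ a, A (g a) (h a) else 0) else 0)]
  rw [Fintype.sum_prod_type]
  apply Finset.sum_congr rfl
  intro g1 _
  apply Finset.sum_congr rfl
  intro g2 _
  rw [← Equiv.sum_comp E (fun h =>
    if cnt (E (g1, g2)) = p then (if cnt h = q then ∏ a, A (E (g1, g2) a) (h a) else 0) else 0)]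
  rw [Fintype.sum_prod_type]
  simp_rw [← pushC]
  refine if_congr (by rw [hcntE]) ?_ rfl
  apply Finset.sum_congr rfl
  intro h1 _
  apply Finset.sum_congr rfl
  intro h2 _
  exact if_congr (by rw [hcntE]) (hprodE g1 h1 g2 h2) rfl


lemma alg1 (PQ x1 x2 x3 x4 kf lf GX GY : ℂ) (h1 : x1 ≠ 0) (h2 : x2 ≠ 0) (h3 : x3 ≠ 0)
    (h4 : x4 ≠ 0) (h5 : kf ≠ 0) (h6 : lf ≠ 0) :
    PQ / (x1 * x2 * x3 * x4) * (x1 * x3 * GX / kf) * (x2 * x4 * GY / lf) =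
      PQ / (kf * lf) * (GX * GY) := by
  rw [div_mul_div_comm, div_mul_div_comm, div_mul_eq_mul_div,
    div_eq_div_iff (mul_ne_zero (mul_ne_zero (mul_ne_zero (mul_ne_zero (mul_ne_zero h1 h2) h3)
      h4) h5) h6) (mul_ne_zero h5 h6)]
  ring

lemma alg2 (PQ kl nf S : ℂ) (hkl : kl ≠ 0) (hnf : nf ≠ 0) :
    PQ * S / nf = kl / nf * (PQ / kl * S) := by
  field_simp

/-- **Laplace expansion formula for the permanent.** -/
theorem permanent_laplace_expansion (m : ℕ) (A : Matrix (Fin m) (Fin m) ℂ) (k l : ℕ)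
    (p q : Fin m → ℕ) (hp : ∑ i, p i = k + l) (hq : ∑ j, q j = k + l) :
    perRep A p q =
      ((Nat.factorial k * Nat.factorial l : ℕ) : ℂ) / ((Nat.factorial (k + l) : ℕ) : ℂ) *
        ∑ st ∈ (Finset.HasAntidiagonal.antidiagonal (Finsupp.equivFunOnFinite.symm p)).filter
            (fun st => (∑ i, st.1 i) = k ∧ (∑ i, st.2 i) = l),
          ∑ uv ∈ (Finset.HasAntidiagonal.antidiagonal (Finsupp.equivFunOnFinite.symm q)).filter
              (fun uv => (∑ j, uv.1 j) = k ∧ (∑ j, uv.2 j) = l),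
            (((∏ i, Nat.factorial (p i)) * ∏ j, Nat.factorial (q j) : ℕ) : ℂ) /
                (((∏ i, Nat.factorial (st.1 i)) * (∏ i, Nat.factorial (st.2 i)) *
                  (∏ j, Nat.factorial (uv.1 j)) * ∏ j, Nat.factorial (uv.2 j) : ℕ) : ℂ) *
              perRep A (⇑st.1) (⇑uv.1) * perRep A (⇑st.2) (⇑uv.2) := by
  classical
  have hfac : ∀ n : ℕ, ((n.factorial : ℕ) : ℂ) ≠ 0 := fun n =>
    Nat.cast_ne_zero.mpr (Nat.factorial_ne_zero n)
  set Tp := (Finset.HasAntidiagonal.antidiagonal (Finsupp.equivFunOnFinite.symm p)).filter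
      (fun st : (Fin m →₀ ℕ) × (Fin m →₀ ℕ) => (∑ i, st.1 i) = k ∧ (∑ i, st.2 i) = l) with hTp
  set Tq := (Finset.HasAntidiagonal.antidiagonal (Finsupp.equivFunOnFinite.symm q)).filter
      (fun uv : (Fin m →₀ ℕ) × (Fin m →₀ ℕ) => (∑ j, uv.1 j) = k ∧ (∑ j, uv.2 j) = l) with hTq
  set Gk : (Fin m → ℕ) → (Fin m → ℕ) → ℂ := fun s u =>
    ∑ g ∈ univ.filter (fun g : Fin k → Fin m => cnt g = s),
      ∑ h ∈ univ.filter (fun h : Fin k → Fin m => cnt h = u), ∏ a, A (g a) (h a) with hGk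
  set Gl : (Fin m → ℕ) → (Fin m → ℕ) → ℂ := fun s u =>
    ∑ g ∈ univ.filter (fun g : Fin l → Fin m => cnt g = s),
      ∑ h ∈ univ.filter (fun h : Fin l → Fin m => cnt h = u), ∏ a, A (g a) (h a) with hGl
  -- Step 1: rewrite each summand
  have step1 : ∀ st ∈ Tp, ∀ uv ∈ Tq,
      (((∏ i, Nat.factorial (p i)) * ∏ j, Nat.factorial (q j) : ℕ) : ℂ) /
          (((∏ i, Nat.factorial (st.1 i)) * (∏ i, Nat.factorial (st.2 i)) *
            (∏ j, Nat.factorial (uv.1 j)) * ∏ j, Nat.factorial (uv.2 j) : ℕ) : ℂ) *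
        perRep A (⇑st.1) (⇑uv.1) * perRep A (⇑st.2) (⇑uv.2)
      = (((∏ i, Nat.factorial (p i)) * ∏ j, Nat.factorial (q j) : ℕ) : ℂ) /
          ((Nat.factorial k * Nat.factorial l : ℕ) : ℂ) *
          (Gk (⇑st.1) (⇑uv.1) * Gl (⇑st.2) (⇑uv.2)) := by
    intro st hst uv huv
    rw [hTp, Finset.mem_filter, Finset.HasAntidiagonal.mem_antidiagonal] at hst
    rw [hTq, Finset.mem_filter, Finset.HasAntidiagonal.mem_antidiagonal] at huv
    obtain ⟨-, hs1, hs2⟩ := hst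
    obtain ⟨-, hu1, hu2⟩ := huv
    have eq1 := claimB A (⇑st.1) (⇑uv.1) hs1 hu1
    have eq2 := claimB A (⇑st.2) (⇑uv.2) hs2 hu2
    have h1 := hfac k; have h2 := hfac l
    have h3 : ((∏ i, Nat.factorial (st.1 i) : ℕ) : ℂ) ≠ 0 := by
      rw [Nat.cast_prod]; exact Finset.prod_ne_zero_iff.mpr fun i _ => hfac _
    have h4 : ((∏ i, Nat.factorial (st.2 i) : ℕ) : ℂ) ≠ 0 := by
      rw [Nat.cast_prod]; exact Finset.prod_ne_zero_iff.mpr fun i _ => hfac _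
    have h5 : ((∏ j, Nat.factorial (uv.1 j) : ℕ) : ℂ) ≠ 0 := by
      rw [Nat.cast_prod]; exact Finset.prod_ne_zero_iff.mpr fun i _ => hfac _
    have h6 : ((∏ j, Nat.factorial (uv.2 j) : ℕ) : ℂ) ≠ 0 := by
      rw [Nat.cast_prod]; exact Finset.prod_ne_zero_iff.mpr fun i _ => hfac _
    have hP1 : perRep A (⇑st.1) (⇑uv.1) =
        ((∏ i, Nat.factorial (st.1 i) : ℕ) : ℂ) * ((∏ j, Nat.factorial (uv.1 j) : ℕ) : ℂ) *
          Gk (⇑st.1) (⇑uv.1) / ((Nat.factorial k : ℕ) : ℂ) := by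
      rw [eq_div_iff (hfac k), mul_comm, hGk]
      exact eq1
    have hP2 : perRep A (⇑st.2) (⇑uv.2) =
        ((∏ i, Nat.factorial (st.2 i) : ℕ) : ℂ) * ((∏ j, Nat.factorial (uv.2 j) : ℕ) : ℂ) *
          Gl (⇑st.2) (⇑uv.2) / ((Nat.factorial l : ℕ) : ℂ) := by
      rw [eq_div_iff (hfac l), mul_comm, hGl]
      exact eq2
    rw [hP1, hP2]
    push_cast at h3 h4 h5 h6 hP1 hP2 ⊢
    exact alg1 _ _ _ _ _ _ _ _ _ h3 h4 h5 h6 h1 h2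
  rw [Finset.sum_congr rfl (fun st hst => Finset.sum_congr rfl (fun uv huv => step1 st hst uv huv))]
  -- Step 2: pull out constants
  rw [show ∑ st ∈ Tp, ∑ uv ∈ Tq,
      (((∏ i, Nat.factorial (p i)) * ∏ j, Nat.factorial (q j) : ℕ) : ℂ) /
        ((Nat.factorial k * Nat.factorial l : ℕ) : ℂ) *
        (Gk (⇑st.1) (⇑uv.1) * Gl (⇑st.2) (⇑uv.2))
      = (((∏ i, Nat.factorial (p i)) * ∏ j, Nat.factorial (q j) : ℕ) : ℂ) /
        ((Nat.factorial k * Nat.factorial l : ℕ) : ℂ) *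
        ∑ st ∈ Tp, ∑ uv ∈ Tq, Gk (⇑st.1) (⇑uv.1) * Gl (⇑st.2) (⇑uv.2) from by
    rw [Finset.mul_sum]
    exact Finset.sum_congr rfl fun st _ => (Finset.mul_sum _ _ _).symm]
  -- Step 3: regroup
  have step3 : ∑ st ∈ Tp, ∑ uv ∈ Tq, Gk (⇑st.1) (⇑uv.1) * Gl (⇑st.2) (⇑uv.2)
      = ∑ g ∈ univ.filter (fun g : Fin (k + l) → Fin m => cnt g = p),
          ∑ h ∈ univ.filter (fun h : Fin (k + l) → Fin m => cnt h = q),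
            ∏ a, A (g a) (h a) := by
    rw [split_lemma A p q]
    calc ∑ st ∈ Tp, ∑ uv ∈ Tq, Gk (⇑st.1) (⇑uv.1) * Gl (⇑st.2) (⇑uv.2)
        = ∑ st ∈ Tp,
            ∑ g1 ∈ univ.filter (fun g1 : Fin k → Fin m => cnt g1 = ⇑st.1),
              ∑ g2 ∈ univ.filter (fun g2 : Fin l → Fin m => cnt g2 = ⇑st.2),
                ∑ uv ∈ Tq,
                  ∑ h1 ∈ univ.filter (fun h1 : Fin k → Fin m => cnt h1 = ⇑uv.1),
                    ∑ h2 ∈ univ.filter (fun h2 : Fin l → Fin m => cnt h2 = ⇑uv.2),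
                      (∏ a, A (g1 a) (h1 a)) * ∏ b, A (g2 b) (h2 b) := by
          apply Finset.sum_congr rfl
          intro st _
          have expand : ∀ uv : (Fin m →₀ ℕ) × (Fin m →₀ ℕ),
              Gk (⇑st.1) (⇑uv.1) * Gl (⇑st.2) (⇑uv.2)
              = ∑ g1 ∈ univ.filter (fun g1 : Fin k → Fin m => cnt g1 = ⇑st.1),
                  ∑ g2 ∈ univ.filter (fun g2 : Fin l → Fin m => cnt g2 = ⇑st.2),
                    ∑ h1 ∈ univ.filter (fun h1 : Fin k → Fin m => cnt h1 = ⇑uv.1),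
                      ∑ h2 ∈ univ.filter (fun h2 : Fin l → Fin m => cnt h2 = ⇑uv.2),
                        (∏ a, A (g1 a) (h1 a)) * ∏ b, A (g2 b) (h2 b) := by
            intro uv
            rw [hGk, hGl]
            simp only []
            rw [Finset.sum_mul_sum]
            apply Finset.sum_congr rfl
            intro g1 _
            apply Finset.sum_congr rfl
            intro g2 _
            rw [Finset.sum_mul_sum]
          rw [Finset.sum_congr rfl fun uv _ => expand uv]
          rw [Finset.sum_comm]
          apply Finset.sum_congr rfl
          intro g1 _
          rw [Finset.sum_comm]
      _ = ∑ g1 : Fin k → Fin m, ∑ g2 : Fin l → Fin m,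
            (if (fun i => cnt g1 i + cnt g2 i) = p then
              (∑ uv ∈ Tq,
                ∑ h1 ∈ univ.filter (fun h1 : Fin k → Fin m => cnt h1 = ⇑uv.1),
                  ∑ h2 ∈ univ.filter (fun h2 : Fin l → Fin m => cnt h2 = ⇑uv.2),
                    (∏ a, A (g1 a) (h1 a)) * ∏ b, A (g2 b) (h2 b)) else 0) := by
          rw [hTp]
          exact group_lemma p _
      _ = ∑ g1 : Fin k → Fin m, ∑ g2 : Fin l → Fin m,
            (if (fun i => cnt g1 i + cnt g2 i) = p then
              (∑ h1 : Fin k → Fin m, ∑ h2 : Fin l → Fin m,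
                if (fun i => cnt h1 i + cnt h2 i) = q then
                  (∏ a, A (g1 a) (h1 a)) * ∏ b, A (g2 b) (h2 b) else 0)
              else 0) := by
          apply Finset.sum_congr rfl
          intro g1 _
          apply Finset.sum_congr rfl
          intro g2 _
          refine if_congr Iff.rfl ?_ rfl
          rw [hTq]
          exact group_lemma q _
  rw [step3]
  -- Step 4: Claim A
  have eqA := claimB A p q hp hq
  set S : ℂ := ∑ g ∈ univ.filter (fun g : Fin (k + l) → Fin m => cnt g = p),
      ∑ h ∈ univ.filter (fun h : Fin (k + l) → Fin m => cnt h = q),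
        ∏ a, A (g a) (h a) with hSdef
  have h1 := hfac k; have h2 := hfac l; have h3 := hfac (k + l)
  have hS : perRep A p q =
      (((∏ i, Nat.factorial (p i)) * ∏ j, Nat.factorial (q j) : ℕ) : ℂ) * S /
        ((Nat.factorial (k + l) : ℕ) : ℂ) := by
    rw [eq_div_iff h3, mul_comm]
    push_cast
    push_cast at eqA
    exact eqA
  rw [hS]
  exact alg2 _ _ _ _ (by rw [Nat.cast_mul]; exact mul_ne_zero h1 h2) h3
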